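/- Farkas' lemma (entailment direction): Let Φ be a satisfiable finite system of non-strict linear inequalities a_{i,0} + a_{i,1}x_1 + … + a_{i,n}x_n ≥ 0 for i = 1..m over real variables x_1,…,x_n. Then Φ entails the linear inequality c_0 + c_1x_1 + … + c_nx_n ≥ 0 if and only if there exist non-negative reals y_0, y_1, …, y_m such that c_0 = y_0 + Σ_{i=1}^m y_i a_{i,0} and c_j = Σ_{i=1}^m y_i a_{i,j} for each j = 1..n. -/

import Mathlib

open scoped InnerProductSpace

theorem esum_apply {ι κ : Type*} [Fintype κ] (f : κ → EuclideanSpace ℝ ι) (j : ι) :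
    (∑ i, f i) j = ∑ i, f i j :=
  by rw [WithLp.ofLp_sum]; exact Finset.sum_apply j Finset.univ _

/-- The conic hull of finitely many vectors in a finite-dimensional normed space is closed. -/
theorem cone_isClosed {H : Type*} [NormedAddCommGroup H] [NormedSpace ℝ H]
    [FiniteDimensional ℝ H] :
    ∀ (k : ℕ) (w : Fin k → H),
      IsClosed {x : H | ∃ y : Fin k → ℝ, (∀ i, 0 ≤ y i) ∧ x = ∑ i, y i • w i} := by
  intro k
  induction k with
  | zero =>
    intro w
    convert isClosed_singleton (x := (0 : H)) using 1
    ext x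
    simp [Set.mem_setOf_eq, eq_comm]
  | succ k ih =>
    intro w
    by_cases hli : LinearIndependent ℝ w
    · set L : (Fin (k+1) → ℝ) →ₗ[ℝ] H :=
        { toFun := fun y => ∑ i, y i • w i
          map_add' := by
            intro y z
            simp [add_smul, Finset.sum_add_distrib]
          map_smul' := by
            intro r y
            simp [smul_smul, Finset.smul_sum] } with hL
      have hker : LinearMap.ker L = ⊥ := by
        rw [LinearMap.ker_eq_bot']
        intro y hy
        have := Fintype.linearIndependent_iff.mp hli y hy
        funext i; exact this i
      have hemb := LinearMap.isClosedEmbedding_of_injective (𝕜 := ℝ) hker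
      have horth : IsClosed {y : Fin (k+1) → ℝ | ∀ i, 0 ≤ y i} := by
        have : {y : Fin (k+1) → ℝ | ∀ i, 0 ≤ y i} = ⋂ i, {y | 0 ≤ y i} := by
          ext y; simp
        rw [this]
        exact isClosed_iInter fun i => isClosed_le continuous_const (continuous_apply i)
      have : {x : H | ∃ y : Fin (k+1) → ℝ, (∀ i, 0 ≤ y i) ∧ x = ∑ i, y i • w i}
          = L '' {y | ∀ i, 0 ≤ y i} := by
        ext x
        constructor
        · rintro ⟨y, hy, rfl⟩; exact ⟨y, hy, rfl⟩
        · rintro ⟨y, hy, rfl⟩; exact ⟨y, hy, rfl⟩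
      rw [this]
      exact hemb.isClosedMap _ horth
    · obtain ⟨g, hg, i0, hgi0⟩ := Fintype.not_linearIndependent_iff.mp hli
      obtain ⟨l, hl, ⟨il, hil⟩⟩ : ∃ l : Fin (k+1) → ℝ, (∑ i, l i • w i = 0) ∧ ∃ i, 0 < l i := by
        by_cases hpos : ∃ i, 0 < g i
        · exact ⟨g, hg, hpos⟩
        · push_neg at hpos
          refine ⟨-g, by simpa using hg, i0, ?_⟩
          simp only [Pi.neg_apply]
          exact neg_pos.mpr (lt_of_le_of_ne (hpos i0) hgi0)
      have key : {x : H | ∃ y : Fin (k+1) → ℝ, (∀ i, 0 ≤ y i) ∧ x = ∑ i, y i • w i}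
          = ⋃ i : Fin (k+1),
            {x : H | ∃ y : Fin k → ℝ, (∀ j, 0 ≤ y j) ∧ x = ∑ j, y j • w (i.succAbove j)} := by
        ext x
        simp only [Set.mem_setOf_eq, Set.mem_iUnion]
        constructor
        · rintro ⟨y, hy, rfl⟩
          set T : Finset (Fin (k+1)) := Finset.univ.filter (fun i => 0 < l i) with hT
          have hTne : T.Nonempty := ⟨il, by simp [hT, hil]⟩
          obtain ⟨i0, hi0T, hmin⟩ := T.exists_min_image (fun i => y i / l i) hTne
          have hli0 : 0 < l i0 := by simpa [hT] using hi0T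
          set t : ℝ := y i0 / l i0 with ht
          have ht0 : 0 ≤ t := div_nonneg (hy i0) hli0.le
          set y' : Fin (k+1) → ℝ := fun i => y i - t * l i with hy'
          have hy'nn : ∀ i, 0 ≤ y' i := by
            intro i
            by_cases hiT : i ∈ T
            · have hlip : 0 < l i := by simpa [hT] using hiT
              have := hmin i hiT
              have : t * l i ≤ y i := (le_div_iff₀ hlip).mp this
              simpa [hy'] using sub_nonneg.mpr this
            · have hlin : l i ≤ 0 := by
                by_contra hc
                exact hiT (by simp [hT, lt_of_not_ge hc])
              have : t * l i ≤ 0 := mul_nonpos_of_nonneg_of_nonpos ht0 hlin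
              simp only [hy']
              linarith [hy i]
          have hy'i0 : y' i0 = 0 := by
            simp only [hy', ht]
            field_simp
            ring
          have hsum : ∑ i, y' i • w i = ∑ i, y i • w i := by
            simp only [hy', sub_smul, mul_smul, Finset.sum_sub_distrib]
            rw [← Finset.smul_sum, hl, smul_zero, sub_zero]
          refine ⟨i0, fun j => y' (i0.succAbove j), fun j => hy'nn _, ?_⟩
          rw [← hsum, Fin.sum_univ_succAbove _ i0, hy'i0, zero_smul, zero_add]
        · rintro ⟨i, y, hy, rfl⟩
          refine ⟨i.insertNth 0 y, ?_, ?_⟩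
          · intro j
            rcases eq_or_ne j i with rfl | hne
            · simp
            · obtain ⟨j', rfl⟩ := Fin.exists_succAbove_eq hne
              simpa using hy j'
          · rw [Fin.sum_univ_succAbove _ i]
            simp
      rw [key]
      exact isClosed_iUnion_of_finite fun i => ih _

/-- Farkas' lemma (entailment direction). -/
theorem farkas_entailment (m n : ℕ) (a : Fin m → Fin n → ℝ) (a0 : Fin m → ℝ)
    (c : Fin n → ℝ) (c0 : ℝ)
    (hsat : ∃ x : Fin n → ℝ, ∀ i, a0 i + ∑ j, a i j * x j ≥ 0) :
    (∀ x : Fin n → ℝ, (∀ i, a0 i + ∑ j, a i j * x j ≥ 0) →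
        c0 + ∑ j, c j * x j ≥ 0) ↔
    ∃ (y0 : ℝ) (y : Fin m → ℝ), 0 ≤ y0 ∧ (∀ i, 0 ≤ y i) ∧
      c0 = y0 + ∑ i, y i * a0 i ∧ ∀ j, c j = ∑ i, y i * a i j := by
  constructor
  · -- hard direction
    intro hent
    classical
    set w : Fin (m+1) → EuclideanSpace ℝ (Fin (n+1)) :=
      Fin.cons (WithLp.toLp 2 (Fin.cons 1 0 : Fin (n+1) → ℝ))
        (fun i => WithLp.toLp 2 (Fin.cons (a0 i) (a i) : Fin (n+1) → ℝ)) with hw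
    set S : Set (EuclideanSpace ℝ (Fin (n+1))) :=
      {x | ∃ y : Fin (m+1) → ℝ, (∀ i, 0 ≤ y i) ∧ x = ∑ i, y i • w i} with hS
    set cv : EuclideanSpace ℝ (Fin (n+1)) := WithLp.toLp 2 (Fin.cons c0 c : Fin (n+1) → ℝ) with hcvdef
    -- membership in S gives the conclusion
    have hmem : cv ∈ S → ∃ (y0 : ℝ) (y : Fin m → ℝ), 0 ≤ y0 ∧ (∀ i, 0 ≤ y i) ∧
        c0 = y0 + ∑ i, y i * a0 i ∧ ∀ j, c j = ∑ i, y i * a i j := by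
      rintro ⟨Y, hY, hcv⟩
      refine ⟨Y 0, fun i => Y i.succ, hY 0, fun i => hY _, ?_, ?_⟩
      · have h0 : cv 0 = (∑ i, Y i • w i) 0 := by rw [hcv]
        rw [esum_apply] at h0
        simpa [hw, hcvdef, Fin.sum_univ_succ, PiLp.smul_apply] using h0
      · intro j
        have hj : cv j.succ = (∑ i, Y i • w i) j.succ := by rw [hcv]
        rw [esum_apply] at hj
        simpa [hw, hcvdef, Fin.sum_univ_succ, PiLp.smul_apply] using hj
    by_contra hne
    have hcvS : cv ∉ S := fun h => hne (hmem h)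
    -- build the convex cone
    set K : ConvexCone ℝ (EuclideanSpace ℝ (Fin (n+1))) :=
      { carrier := S
        smul_mem' := by
          rintro r hr x ⟨y, hy, rfl⟩
          exact ⟨r • y, fun i => mul_nonneg hr.le (hy i), by
            simp [Finset.smul_sum, smul_smul]⟩
        add_mem' := by
          rintro x ⟨y, hy, rfl⟩ x' ⟨y', hy', rfl⟩
          exact ⟨y + y', fun i => add_nonneg (hy i) (hy' i), by
            simp [add_smul, Finset.sum_add_distrib]⟩ } with hK
    have hKne : (K : Set (EuclideanSpace ℝ (Fin (n+1)))).Nonempty :=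
      ⟨0, 0, fun i => le_refl 0, by simp⟩
    have hKcl : IsClosed (K : Set (EuclideanSpace ℝ (Fin (n+1)))) := cone_isClosed _ w
    have hcvK : cv ∉ K := hcvS
    obtain ⟨z, hzK, hzc⟩ :=
      ProperCone.hyperplane_separation' (x₀ := cv)
        ({ carrier := (K : Set (EuclideanSpace ℝ (Fin (n+1))))
           add_mem' := fun ha hb => K.add_mem ha hb
           zero_mem' := ⟨0, fun i => le_refl 0, by simp⟩
           smul_mem' := by
             rintro ⟨r, hr⟩ x hx
             rcases hr.eq_or_lt with h | h
             · subst h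
               exact ⟨0, fun i => le_refl 0, by simp⟩
             · exact K.smul_mem h hx
           isClosed' := hKcl } : ProperCone ℝ (EuclideanSpace ℝ (Fin (n+1)))) hcvK
    -- the generators are in K
    have hwK : ∀ i, w i ∈ K := by
      intro i
      refine ⟨Pi.single i 1, fun j => ?_, ?_⟩
      · rcases eq_or_ne j i with rfl | hne'
        · simp
        · simp [Pi.single_apply, hne']
      · simp [Pi.single_apply, ite_smul]
    have hz0 : 0 ≤ z 0 := by
      have := hzK _ (hwK 0)
      rw [PiLp.inner_apply] at this
      simpa [hw, Fin.sum_univ_succ] using this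
    have hzi : ∀ i, 0 ≤ a0 i * z 0 + ∑ j, a i j * z j.succ := by
      intro i
      have := hzK _ (hwK i.succ)
      rw [PiLp.inner_apply] at this
      simpa [hw, Fin.sum_univ_succ, mul_comm] using this
    have hneg : c0 * z 0 + ∑ j, c j * z j.succ < 0 := by
      rw [real_inner_comm, PiLp.inner_apply] at hzc
      simpa [hcvdef, Fin.sum_univ_succ] using hzc
    rcases hz0.lt_or_eq with hpos | hzero
    · -- z 0 > 0: rescale z to get a violating point
      have key : ∀ (b : ℝ) (v : Fin n → ℝ),
          b + ∑ j, v j * (z j.succ / z 0) = (b * z 0 + ∑ j, v j * z j.succ) / z 0 := by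
        intro b v
        rw [add_div, mul_div_cancel_right₀ _ hpos.ne', Finset.sum_div]
        simp [mul_div_assoc]
      have hfeas : ∀ i, a0 i + ∑ j, a i j * (z j.succ / z 0) ≥ 0 := by
        intro i
        rw [key]
        exact div_nonneg (hzi i) hpos.le
      have hc := hent _ hfeas
      rw [key] at hc
      exact absurd hc (not_le.mpr (div_neg_of_neg_of_pos hneg hpos))
    · -- z 0 = 0: use satisfiability and go far along z'
      obtain ⟨xb, hxb⟩ := hsat
      have hα : ∑ j, c j * z j.succ < 0 := by
        rw [← hzero] at hneg; simpa using hneg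
      have hai : ∀ i, 0 ≤ ∑ j, a i j * z j.succ := by
        intro i
        have := hzi i
        rw [← hzero] at this; simpa using this
      set α : ℝ := ∑ j, c j * z j.succ with hαdef
      set β : ℝ := c0 + ∑ j, c j * xb j with hβdef
      have hβ : 0 ≤ β := hent xb hxb
      set t : ℝ := (β + 1) / (-α) with htdef
      have ht : 0 ≤ t := div_nonneg (by linarith) (by linarith)
      have expand : ∀ v : Fin n → ℝ,
          ∑ j, v j * (xb j + t * z j.succ) = ∑ j, v j * xb j + t * ∑ j, v j * z j.succ := by
        intro v
        rw [Finset.mul_sum, ← Finset.sum_add_distrib]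
        congr 1; funext j; ring
      have hfeas : ∀ i, a0 i + ∑ j, a i j * (xb j + t * z j.succ) ≥ 0 := by
        intro i
        rw [expand]
        have h1 := hxb i
        have h2 := mul_nonneg ht (hai i)
        linarith
      have hc := hent _ hfeas
      rw [expand] at hc
      have hαne : α ≠ 0 := hα.ne
      have htα : t * α = -(β + 1) := by
        rw [htdef, div_mul_eq_mul_div, div_neg, mul_div_assoc, div_self hαne, mul_one]
      rw [← hαdef] at hc
      rw [htα] at hc
      simp only [hβdef] at hc ⊢
      linarith
  · -- easy direction
    rintro ⟨y0, y, hy0, hy, hc0, hc⟩ x hx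
    have hkey : c0 + ∑ j, c j * x j = y0 + ∑ i, y i * (a0 i + ∑ j, a i j * x j) := by
      rw [hc0]
      have h1 : ∑ j, c j * x j = ∑ i, y i * ∑ j, a i j * x j := by
        calc ∑ j, c j * x j = ∑ j, (∑ i, y i * a i j) * x j := by
              apply Finset.sum_congr rfl; intro j _; rw [← hc j]
          _ = ∑ j, ∑ i, y i * a i j * x j := by
              apply Finset.sum_congr rfl; intro j _; rw [Finset.sum_mul]
          _ = ∑ i, ∑ j, y i * a i j * x j := Finset.sum_comm
          _ = ∑ i, y i * ∑ j, a i j * x j := by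
              apply Finset.sum_congr rfl; intro i _
              rw [Finset.mul_sum]
              apply Finset.sum_congr rfl; intro j _; ring
      rw [h1]
      simp only [mul_add, Finset.sum_add_distrib]
      ring
    rw [ge_iff_le, hkey]
    exact add_nonneg hy0 (Finset.sum_nonneg fun i _ => mul_nonneg (hy i) (hx i))
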